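/- Let S be a set of n points in the plane ℝ² that spans at least one nondegenerate triangle, and let A > 0 be the minimum area over all nondegenerate triangles spanned by S. Then the number of unordered triples of distinct points of S forming a triangle of area exactly A is at most (2/3)·(n² − n). -/

import Mathlib

open scoped Classical

/-- The plane `ℝ²`. -/
noncomputable abbrev Plane := EuclideanSpace ℝ (Fin 2)

/-- Area of the triangle with vertices `a b c` in the plane:
`(1/2)·|det(b − a, c − a)|`. -/
noncomputable def triArea2 (a b c : Plane) : ℝ :=
  |(b 0 - a 0) * (c 1 - a 1) - (b 1 - a 1) * (c 0 - a 0)| / 2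

/-- The number of unordered triples of distinct points of `S` that span a
triangle of area exactly `A`. -/
noncomputable def areaTripleCount2 (S : Finset Plane) (A : ℝ) : ℕ :=
  Set.ncard {T : Finset Plane | T ⊆ S ∧ T.card = 3 ∧
    ∃ a b c : Plane, T = {a, b, c} ∧ triArea2 a b c = A}

/-- The set of areas of nondegenerate triangles spanned by `S`. -/
def posAreaSet2 (S : Finset Plane) : Set ℝ :=
  {x : ℝ | ∃ a ∈ S, ∃ b ∈ S, ∃ c ∈ S, 0 < triArea2 a b c ∧ triArea2 a b c = x}

namespace MinArea2Aux
open Finset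

abbrev Pt := ℝ × ℝ


noncomputable def kfun (A : ℝ) (P : Finset Pt) (w : Pt × Pt) : ℕ :=
  (P.filter fun c => (w.2.1 - w.1.1) * (c.2 - w.1.2) = 2 * A).card

noncomputable def coreGood (A : ℝ) (P : Finset Pt) : Finset (Pt × Pt × Pt) :=
  (P ×ˢ P ×ˢ P).filter fun z =>
    z.1.2 = z.2.1.2 ∧ (z.2.1.1 - z.1.1) * (z.2.2.2 - z.1.2) = 2 * A

noncomputable def pairC (P : Finset Pt) : Finset (Pt × Pt) := P.offDiag.filter fun w => w.1.2 = w.2.2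

noncomputable def Qrow (P : Finset Pt) (t : ℝ) : Finset (Pt × Pt) := (pairC P).filter fun w => w.1.2 = t

noncomputable def rowP (P : Finset Pt) (s : ℝ) : Finset Pt := P.filter fun c => c.2 = s

noncomputable def dmin (P : Finset Pt) (t : ℝ) : ℝ :=
  if h : (Qrow P t).Nonempty then
    ((Qrow P t).image fun w => |w.2.1 - w.1.1|).min' (h.image _) else 1

lemma mem_coreGood {A : ℝ} {P : Finset Pt} {z : Pt × Pt × Pt} :
    z ∈ coreGood A P ↔ z.1 ∈ P ∧ z.2.1 ∈ P ∧ z.2.2 ∈ P ∧ z.1.2 = z.2.1.2 ∧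
      (z.2.1.1 - z.1.1) * (z.2.2.2 - z.1.2) = 2 * A := by
  simp [coreGood, Finset.mem_filter, Finset.mem_product, and_assoc]

lemma mem_pairC {P : Finset Pt} {w : Pt × Pt} :
    w ∈ pairC P ↔ w.1 ∈ P ∧ w.2 ∈ P ∧ w.1 ≠ w.2 ∧ w.1.2 = w.2.2 := by
  simp [pairC, Finset.mem_filter, Finset.mem_offDiag, and_assoc]

lemma mem_Qrow {P : Finset Pt} {t : ℝ} {w : Pt × Pt} :
    w ∈ Qrow P t ↔ w.1 ∈ P ∧ w.2 ∈ P ∧ w.1 ≠ w.2 ∧ w.1.2 = t ∧ w.2.2 = t := by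
  simp only [Qrow, mem_filter, mem_pairC]
  constructor
  · rintro ⟨⟨h1, h2, h3, h4⟩, h5⟩
    exact ⟨h1, h2, h3, h5, by rw [← h4]; exact h5⟩
  · rintro ⟨h1, h2, h3, h4, h5⟩
    exact ⟨⟨h1, h2, h3, h4.trans h5.symm⟩, h4⟩

lemma Qrow_eq_offDiag (P : Finset Pt) (t : ℝ) : Qrow P t = (rowP P t).offDiag := by
  ext w
  simp only [mem_Qrow, Finset.mem_offDiag, rowP, mem_filter]
  tauto

lemma gap_ne {P : Finset Pt} {t : ℝ} {w : Pt × Pt} (hw : w ∈ Qrow P t) :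
    w.2.1 ≠ w.1.1 := by
  obtain ⟨h1, h2, h3, h4, h5⟩ := mem_Qrow.mp hw
  intro h
  exact h3 (Prod.ext h.symm (h4.trans h5.symm))

lemma dmin_le {P : Finset Pt} {t : ℝ} {w : Pt × Pt} (hw : w ∈ Qrow P t) :
    dmin P t ≤ |w.2.1 - w.1.1| := by
  rw [dmin, dif_pos ⟨w, hw⟩]
  exact Finset.min'_le _ _ (Finset.mem_image_of_mem _ hw)

lemma exists_dmin {P : Finset Pt} {t : ℝ} (h : (Qrow P t).Nonempty) :
    ∃ w ∈ Qrow P t, |w.2.1 - w.1.1| = dmin P t := by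
  rw [dmin, dif_pos h]
  have hm := Finset.min'_mem ((Qrow P t).image fun w => |w.2.1 - w.1.1|) (h.image _)
  rw [Finset.mem_image] at hm
  obtain ⟨w, hw, he⟩ := hm
  exact ⟨w, hw, he⟩

lemma dmin_pos {P : Finset Pt} {t : ℝ} (h : (Qrow P t).Nonempty) : 0 < dmin P t := by
  obtain ⟨w, hw, he⟩ := exists_dmin h
  rw [← he]
  exact abs_pos.mpr (sub_ne_zero.mpr (gap_ne hw))

lemma nat_amgm (a b : ℕ) : 2 * ((a - 1) * b) ≤ (a * a - a) + (b * b - b) := by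
  rcases Nat.eq_zero_or_pos a with h | h
  · subst h; simp
  rcases Nat.eq_zero_or_pos b with h' | h'
  · subst h'; simp
  have haa : a ≤ a * a := Nat.le_mul_of_pos_left a h
  have hbb : b ≤ b * b := Nat.le_mul_of_pos_left b h'
  zify [h, h', haa, hbb]
  rcases le_or_gt (a : ℤ) (b : ℤ) with hab | hab
  · nlinarith
  · nlinarith


lemma halfsum (P : Finset Pt) (σ : ℝ → ℝ)
    (hσ : ∀ t t', (Qrow P t).Nonempty → (Qrow P t').Nonempty → σ t = σ t' → t = t') :
    ∑ t ∈ P.image Prod.snd, 2 * (((rowP P t).card - 1) * (rowP P (σ t)).card)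
      ≤ 2 * ∑ t ∈ P.image Prod.snd,
          ((rowP P t).card * (rowP P t).card - (rowP P t).card) := by
  classical
  set Y := P.image Prod.snd with hYdef
  set f : ℝ → ℕ := fun s => (rowP P s).card * (rowP P s).card - (rowP P s).card with hfdef
  set Y₂ := Y.filter (fun t => (Qrow P t).Nonempty) with hY2def
  have hrestrict : ∑ t ∈ Y, 2 * (((rowP P t).card - 1) * (rowP P (σ t)).card)
      = ∑ t ∈ Y₂, 2 * (((rowP P t).card - 1) * (rowP P (σ t)).card) := by
    refine (Finset.sum_filter_of_ne ?_).symm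
    intro t _ hne
    have h1 : (rowP P t).card - 1 ≠ 0 := by
      intro h
      apply hne
      rw [h]
      ring
    have h2 : 1 < (rowP P t).card := by omega
    rw [Qrow_eq_offDiag]
    obtain ⟨a, ha, b, hb, hab⟩ := Finset.one_lt_card.mp h2
    exact ⟨(a, b), Finset.mem_offDiag.mpr ⟨ha, hb, hab⟩⟩
  rw [hrestrict]
  have hbound : ∑ t ∈ Y₂, 2 * (((rowP P t).card - 1) * (rowP P (σ t)).card)
      ≤ ∑ t ∈ Y₂, (f t + f (σ t)) := by
    apply Finset.sum_le_sum
    intro t _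
    exact nat_amgm _ _
  have hsplit : ∑ t ∈ Y₂, (f t + f (σ t)) = ∑ t ∈ Y₂, f t + ∑ t ∈ Y₂, f (σ t) :=
    Finset.sum_add_distrib
  have hY2sub : Y₂ ⊆ Y := Finset.filter_subset _ _
  have hfirst : ∑ t ∈ Y₂, f t ≤ ∑ t ∈ Y, f t := Finset.sum_le_sum_of_subset hY2sub
  have hsecond : ∑ t ∈ Y₂, f (σ t) ≤ ∑ t ∈ Y, f t := by
    have hinj : ∀ x ∈ Y₂, ∀ y ∈ Y₂, σ x = σ y → x = y := by
      intro x hx y hy hxy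
      exact hσ x y (Finset.mem_filter.mp hx).2 (Finset.mem_filter.mp hy).2 hxy
    rw [← Finset.sum_image hinj]
    have hz : ∀ s ∈ Y₂.image σ, f s ≠ 0 → s ∈ Y := by
      intro s _ hfs
      have hcard : (rowP P s).card ≠ 0 := by
        intro h
        apply hfs
        simp only [hfdef, h]
      obtain ⟨c, hc⟩ := Finset.card_pos.mp (Nat.pos_of_ne_zero hcard)
      rw [rowP, Finset.mem_filter] at hc
      exact Finset.mem_image.mpr ⟨c, hc.1, hc.2⟩
    calc ∑ s ∈ Y₂.image σ, f s
        = ∑ s ∈ (Y₂.image σ).filter (· ∈ Y), f s := (Finset.sum_filter_of_ne hz).symm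
      _ ≤ ∑ s ∈ Y, f s := Finset.sum_le_sum_of_subset (fun s hs => (Finset.mem_filter.mp hs).2)
  calc ∑ t ∈ Y₂, 2 * (((rowP P t).card - 1) * (rowP P (σ t)).card)
      ≤ ∑ t ∈ Y₂, (f t + f (σ t)) := hbound
    _ = ∑ t ∈ Y₂, f t + ∑ t ∈ Y₂, f (σ t) := hsplit
    _ ≤ ∑ t ∈ Y, f t + ∑ t ∈ Y, f t := Nat.add_le_add hfirst hsecond
    _ = 2 * ∑ t ∈ Y, f t := (two_mul _).symm

section WithMin

variable {A : ℝ} {P : Finset Pt}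

variable (hA : 0 < A)
variable (hmin : ∀ a ∈ P, ∀ b ∈ P, ∀ c ∈ P, a.2 = b.2 → a ≠ b → c.2 ≠ a.2 →
      2 * A ≤ |b.1 - a.1| * |c.2 - a.2|)

include hA hmin

lemma gap_eq_dmin {t : ℝ} {w : Pt × Pt} (hw : w ∈ Qrow P t) (hk : 0 < kfun A P w) :
    |w.2.1 - w.1.1| = dmin P t := by
  obtain ⟨hw1, hw2, hwne, hwt1, hwt2⟩ := mem_Qrow.mp hw
  obtain ⟨c, hc⟩ := Finset.card_pos.mp hk
  rw [Finset.mem_filter] at hc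
  obtain ⟨hcP, hceq⟩ := hc
  rw [hwt1] at hceq
  have hct : c.2 ≠ t := by
    intro h
    rw [h, sub_self, mul_zero] at hceq
    linarith
  have hcpos : 0 < |c.2 - t| := abs_pos.mpr (sub_ne_zero.mpr hct)
  have habs : |w.2.1 - w.1.1| * |c.2 - t| = 2 * A := by
    rw [← abs_mul, hceq]
    exact abs_of_pos (by linarith)
  obtain ⟨w', hw', he'⟩ := exists_dmin ⟨w, hw⟩
  obtain ⟨h1', h2', hne', ht1', ht2'⟩ := mem_Qrow.mp hw'
  have hmin' := hmin w'.1 h1' w'.2 h2' c hcP (ht1'.trans ht2'.symm) hne'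
    (by rw [ht1']; exact hct)
  rw [ht1'] at hmin'
  have h1 : |w.2.1 - w.1.1| * |c.2 - t| ≤ |w'.2.1 - w'.1.1| * |c.2 - t| := by
    rw [habs]; exact hmin'
  have h2 : |w.2.1 - w.1.1| ≤ |w'.2.1 - w'.1.1| := le_of_mul_le_mul_right h1 hcpos
  exact le_antisymm (he' ▸ h2) (dmin_le hw)

lemma kfun_plus {t : ℝ} {w : Pt × Pt} (hw : w ∈ Qrow P t) (hk : 0 < kfun A P w)
    (hgap : 0 < w.2.1 - w.1.1) :
    kfun A P w = (rowP P (t + 2 * A / dmin P t)).card := by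
  have hd : w.2.1 - w.1.1 = dmin P t := by
    have := gap_eq_dmin hA hmin hw hk
    rwa [abs_of_pos hgap] at this
  obtain ⟨hw1, hw2, hwne, hwt1, hwt2⟩ := mem_Qrow.mp hw
  have hdpos : 0 < dmin P t := dmin_pos ⟨w, hw⟩
  unfold kfun rowP
  congr 1
  apply Finset.filter_congr
  intro c _
  rw [hwt1, hd]
  constructor
  · intro h
    have : c.2 - t = 2 * A / dmin P t := by
      rw [eq_div_iff (ne_of_gt hdpos)]
      linarith [h]
    linarith [this]
  · intro h
    rw [h]
    field_simp
    ring

lemma kfun_minus {t : ℝ} {w : Pt × Pt} (hw : w ∈ Qrow P t) (hk : 0 < kfun A P w)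
    (hgap : w.2.1 - w.1.1 < 0) :
    kfun A P w = (rowP P (t - 2 * A / dmin P t)).card := by
  have hd : w.2.1 - w.1.1 = -dmin P t := by
    have := gap_eq_dmin hA hmin hw hk
    rw [abs_of_neg hgap] at this
    linarith
  obtain ⟨hw1, hw2, hwne, hwt1, hwt2⟩ := mem_Qrow.mp hw
  have hdpos : 0 < dmin P t := dmin_pos ⟨w, hw⟩
  unfold kfun rowP
  congr 1
  apply Finset.filter_congr
  intro c _
  rw [hwt1, hd]
  constructor
  · intro h
    have : c.2 - t = -(2 * A / dmin P t) := by
      rw [eq_comm, neg_eq_iff_eq_neg, eq_comm, eq_div_iff (ne_of_gt hdpos)]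
      nlinarith [h]
    linarith [this]
  · intro h
    rw [h]
    field_simp
    ring


lemma card_Wplus (t : ℝ) :
    (((Qrow P t).filter fun w => 0 < kfun A P w ∧ 0 < w.2.1 - w.1.1)).card
      ≤ (rowP P t).card - 1 := by
  set W := ((Qrow P t).filter fun w => 0 < kfun A P w ∧ 0 < w.2.1 - w.1.1) with hW
  rcases Finset.eq_empty_or_nonempty W with he | hne
  · simp [he]
  obtain ⟨w₀, hw₀⟩ := hne
  have hw₀Q : w₀ ∈ Qrow P t := (Finset.mem_filter.mp hw₀).1
  have hrowne : (rowP P t).Nonempty := by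
    obtain ⟨h1, h2, h3, h4, h5⟩ := mem_Qrow.mp hw₀Q
    exact ⟨w₀.1, Finset.mem_filter.mpr ⟨h1, h4⟩⟩
  obtain ⟨m, hm, hmax⟩ := Finset.exists_max_image (rowP P t) (fun p => p.1) hrowne
  have hgapd : ∀ w ∈ W, w.2.1 - w.1.1 = dmin P t := by
    intro w hw
    rw [Finset.mem_filter] at hw
    obtain ⟨hwQ, hk, hgap⟩ := hw
    have := gap_eq_dmin hA hmin hwQ hk
    rwa [abs_of_pos hgap] at this
  have hmapsto : ∀ w ∈ W, w.1 ∈ (rowP P t).erase m := by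
    intro w hw
    have hwQ : w ∈ Qrow P t := (Finset.mem_filter.mp hw).1
    obtain ⟨h1, h2, h3, h4, h5⟩ := mem_Qrow.mp hwQ
    have hgap : 0 < w.2.1 - w.1.1 := (Finset.mem_filter.mp hw).2.2
    have hw2row : w.2 ∈ rowP P t := Finset.mem_filter.mpr ⟨h2, h5⟩
    refine Finset.mem_erase.mpr ⟨?_, Finset.mem_filter.mpr ⟨h1, h4⟩⟩
    intro hcontra
    have := hmax w.2 hw2row
    rw [← hcontra] at this
    linarith
  have hinj : Set.InjOn (fun w : Pt × Pt => w.1) ↑W := by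
    intro w hw w' hw' heq
    rw [Finset.mem_coe] at hw hw'
    simp only at heq
    have d1 := hgapd w hw
    have d2 := hgapd w' hw'
    obtain ⟨_, _, _, _, h5⟩ := mem_Qrow.mp (Finset.mem_filter.mp hw).1
    obtain ⟨_, _, _, _, h5'⟩ := mem_Qrow.mp (Finset.mem_filter.mp hw').1
    refine Prod.ext heq (Prod.ext ?_ (h5.trans h5'.symm))
    have : w.1.1 = w'.1.1 := by rw [heq]
    linarith
  calc W.card ≤ ((rowP P t).erase m).card :=
        Finset.card_le_card_of_injOn (fun w => w.1) hmapsto hinj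
    _ = (rowP P t).card - 1 := Finset.card_erase_of_mem hm


lemma card_Wminus (t : ℝ) :
    (((Qrow P t).filter fun w => 0 < kfun A P w ∧ w.2.1 - w.1.1 < 0)).card
      ≤ (rowP P t).card - 1 := by
  set W := ((Qrow P t).filter fun w => 0 < kfun A P w ∧ w.2.1 - w.1.1 < 0) with hW
  rcases Finset.eq_empty_or_nonempty W with he | hne
  · simp [he]
  obtain ⟨w₀, hw₀⟩ := hne
  have hw₀Q : w₀ ∈ Qrow P t := (Finset.mem_filter.mp hw₀).1
  have hrowne : (rowP P t).Nonempty := by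
    obtain ⟨h1, h2, h3, h4, h5⟩ := mem_Qrow.mp hw₀Q
    exact ⟨w₀.1, Finset.mem_filter.mpr ⟨h1, h4⟩⟩
  obtain ⟨m, hm, hmax⟩ := Finset.exists_max_image (rowP P t) (fun p => p.1) hrowne
  have hgapd : ∀ w ∈ W, w.2.1 - w.1.1 = -dmin P t := by
    intro w hw
    rw [Finset.mem_filter] at hw
    obtain ⟨hwQ, hk, hgap⟩ := hw
    have := gap_eq_dmin hA hmin hwQ hk
    rw [abs_of_neg hgap] at this
    linarith
  have hmapsto : ∀ w ∈ W, w.2 ∈ (rowP P t).erase m := by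
    intro w hw
    have hwQ : w ∈ Qrow P t := (Finset.mem_filter.mp hw).1
    obtain ⟨h1, h2, h3, h4, h5⟩ := mem_Qrow.mp hwQ
    have hgap : w.2.1 - w.1.1 < 0 := (Finset.mem_filter.mp hw).2.2
    have hw1row : w.1 ∈ rowP P t := Finset.mem_filter.mpr ⟨h1, h4⟩
    refine Finset.mem_erase.mpr ⟨?_, Finset.mem_filter.mpr ⟨h2, h5⟩⟩
    intro hcontra
    have := hmax w.1 hw1row
    rw [← hcontra] at this
    linarith
  have hinj : Set.InjOn (fun w : Pt × Pt => w.2) ↑W := by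
    intro w hw w' hw' heq
    rw [Finset.mem_coe] at hw hw'
    simp only at heq
    have d1 := hgapd w hw
    have d2 := hgapd w' hw'
    obtain ⟨_, _, _, h4, _⟩ := mem_Qrow.mp (Finset.mem_filter.mp hw).1
    obtain ⟨_, _, _, h4', _⟩ := mem_Qrow.mp (Finset.mem_filter.mp hw').1
    refine Prod.ext (Prod.ext ?_ (h4.trans h4'.symm)) heq
    have : w.2.1 = w'.2.1 := by rw [heq]
    linarith
  calc W.card ≤ ((rowP P t).erase m).card :=
        Finset.card_le_card_of_injOn (fun w => w.2) hmapsto hinj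
    _ = (rowP P t).card - 1 := Finset.card_erase_of_mem hm


lemma rowbound (t : ℝ) :
    (∑ w ∈ Qrow P t, kfun A P w) ≤
      ((rowP P t).card - 1) * (rowP P (t + 2 * A / dmin P t)).card
      + ((rowP P t).card - 1) * (rowP P (t - 2 * A / dmin P t)).card := by
  have e0 : (∑ w ∈ Qrow P t, kfun A P w)
      = ∑ w ∈ (Qrow P t).filter (fun w => 0 < kfun A P w), kfun A P w := by
    refine (Finset.sum_filter_of_ne ?_).symm
    intro w _ h
    exact Nat.pos_of_ne_zero h
  rw [e0, ← Finset.sum_filter_add_sum_filter_not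
    ((Qrow P t).filter fun w => 0 < kfun A P w)
    (fun w => 0 < w.2.1 - w.1.1) (kfun A P)]
  have h1 : ∑ w ∈ ((Qrow P t).filter fun w => 0 < kfun A P w).filter
      (fun w => 0 < w.2.1 - w.1.1), kfun A P w
      ≤ ((rowP P t).card - 1) * (rowP P (t + 2 * A / dmin P t)).card := by
    rw [Finset.filter_filter]
    have hconst : ∀ w ∈ (Qrow P t).filter (fun w => 0 < kfun A P w ∧ 0 < w.2.1 - w.1.1),
        kfun A P w = (rowP P (t + 2 * A / dmin P t)).card := by
      intro w hw
      rw [Finset.mem_filter] at hw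
      exact kfun_plus hA hmin hw.1 hw.2.1 hw.2.2
    rw [Finset.sum_congr rfl hconst, Finset.sum_const, smul_eq_mul]
    exact Nat.mul_le_mul_right _ (card_Wplus hA hmin t)
  have h2 : ∑ w ∈ ((Qrow P t).filter fun w => 0 < kfun A P w).filter
      (fun w => ¬ 0 < w.2.1 - w.1.1), kfun A P w
      ≤ ((rowP P t).card - 1) * (rowP P (t - 2 * A / dmin P t)).card := by
    rw [Finset.filter_filter]
    have hiff : (Qrow P t).filter (fun w => 0 < kfun A P w ∧ ¬ 0 < w.2.1 - w.1.1)
        = (Qrow P t).filter (fun w => 0 < kfun A P w ∧ w.2.1 - w.1.1 < 0) := by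
      apply Finset.filter_congr
      intro w hw
      have hne0 : w.2.1 - w.1.1 ≠ 0 := sub_ne_zero.mpr (gap_ne hw)
      constructor
      · rintro ⟨hk, hng⟩
        exact ⟨hk, lt_of_le_of_ne (not_lt.mp hng) hne0⟩
      · rintro ⟨hk, hg⟩
        exact ⟨hk, not_lt.mpr (le_of_lt hg)⟩
    rw [hiff]
    have hconst : ∀ w ∈ (Qrow P t).filter (fun w => 0 < kfun A P w ∧ w.2.1 - w.1.1 < 0),
        kfun A P w = (rowP P (t - 2 * A / dmin P t)).card := by
      intro w hw
      rw [Finset.mem_filter] at hw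
      exact kfun_minus hA hmin hw.1 hw.2.1 hw.2.2
    rw [Finset.sum_congr rfl hconst, Finset.sum_const, smul_eq_mul]
    exact Nat.mul_le_mul_right _ (card_Wminus hA hmin t)
  exact Nat.add_le_add h1 h2

lemma see_plus {t t' : ℝ} (ht : (Qrow P t).Nonempty) (ht' : (Qrow P t').Nonempty)
    (heq : t + 2 * A / dmin P t = t' + 2 * A / dmin P t') : t = t' := by
  by_contra hne
  obtain ⟨w, hw, hwd⟩ := exists_dmin ht
  obtain ⟨w', hw', hwd'⟩ := exists_dmin ht'
  obtain ⟨hw1, hw2, hwne, hwt1, hwt2⟩ := mem_Qrow.mp hw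
  obtain ⟨hw1', hw2', hwne', hwt1', hwt2'⟩ := mem_Qrow.mp hw'
  have h1 := hmin w.1 hw1 w.2 hw2 w'.1 hw1' (hwt1.trans hwt2.symm) hwne
    (by rw [hwt1', hwt1]; exact fun h => hne h.symm)
  rw [hwd, hwt1, hwt1'] at h1
  have h2 := hmin w'.1 hw1' w'.2 hw2' w.1 hw1 (hwt1'.trans hwt2'.symm) hwne'
    (by rw [hwt1, hwt1']; exact hne)
  rw [hwd', hwt1', hwt1] at h2
  have hd := dmin_pos ht
  have hd' := dmin_pos ht'
  have hδ : 0 < 2 * A / dmin P t := by positivity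
  have hδ' : 0 < 2 * A / dmin P t' := by positivity
  have h1' : 2 * A / dmin P t ≤ |t' - t| := by
    rw [div_le_iff₀ hd]
    nlinarith [h1]
  have h2' : 2 * A / dmin P t' ≤ |t - t'| := by
    rw [div_le_iff₀ hd']
    nlinarith [h2]
  rcases le_or_gt t t' with hc | hc
  · rw [abs_of_nonneg (by linarith)] at h1'
    linarith
  · rw [abs_of_nonneg (by linarith)] at h2'
    linarith

lemma see_minus {t t' : ℝ} (ht : (Qrow P t).Nonempty) (ht' : (Qrow P t').Nonempty)
    (heq : t - 2 * A / dmin P t = t' - 2 * A / dmin P t') : t = t' := by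
  by_contra hne
  obtain ⟨w, hw, hwd⟩ := exists_dmin ht
  obtain ⟨w', hw', hwd'⟩ := exists_dmin ht'
  obtain ⟨hw1, hw2, hwne, hwt1, hwt2⟩ := mem_Qrow.mp hw
  obtain ⟨hw1', hw2', hwne', hwt1', hwt2'⟩ := mem_Qrow.mp hw'
  have h1 := hmin w.1 hw1 w.2 hw2 w'.1 hw1' (hwt1.trans hwt2.symm) hwne
    (by rw [hwt1', hwt1]; exact fun h => hne h.symm)
  rw [hwd, hwt1, hwt1'] at h1
  have h2 := hmin w'.1 hw1' w'.2 hw2' w.1 hw1 (hwt1'.trans hwt2'.symm) hwne'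
    (by rw [hwt1, hwt1']; exact hne)
  rw [hwd', hwt1', hwt1] at h2
  have hd := dmin_pos ht
  have hd' := dmin_pos ht'
  have hδ : 0 < 2 * A / dmin P t := by positivity
  have hδ' : 0 < 2 * A / dmin P t' := by positivity
  have h1' : 2 * A / dmin P t ≤ |t' - t| := by
    rw [div_le_iff₀ hd]
    nlinarith [h1]
  have h2' : 2 * A / dmin P t' ≤ |t - t'| := by
    rw [div_le_iff₀ hd']
    nlinarith [h2]
  rcases le_or_gt t t' with hc | hc
  · rw [abs_of_nonpos (by linarith)] at h2'
    linarith
  · rw [abs_of_nonpos (by linarith)] at h1'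
    linarith


theorem core : (coreGood A P).card ≤ 2 * (pairC P).card := by
  classical
  have hmapsto : ∀ w ∈ pairC P, w.1.2 ∈ P.image Prod.snd := by
    intro w hw
    exact Finset.mem_image_of_mem _ (mem_pairC.mp hw).1
  have hstep1 : (coreGood A P).card = ∑ w ∈ pairC P, kfun A P w := by
    rw [Finset.card_eq_sum_card_fiberwise
      (f := fun z : Pt × Pt × Pt => (z.1, z.2.1)) (t := pairC P) ?_]
    · apply Finset.sum_congr rfl
      intro w hw
      obtain ⟨hw1, hw2, hwne, hweq⟩ := mem_pairC.mp hw
      refine Finset.card_bij' (fun z _ => z.2.2) (fun c _ => (w.1, w.2, c)) ?_ ?_ ?_ ?_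
      · intro z hz
        rw [Finset.mem_filter] at hz
        obtain ⟨hzg, hzw⟩ := hz
        obtain ⟨hz1, hz2, hz3, hz4, hz5⟩ := mem_coreGood.mp hzg
        rw [Finset.mem_filter]
        refine ⟨hz3, ?_⟩
        obtain ⟨e1, e2⟩ := Prod.mk.injEq .. ▸ hzw
        rw [← e1, ← e2]
        exact hz5
      · intro c hc
        rw [Finset.mem_filter] at hc
        rw [Finset.mem_filter]
        exact ⟨mem_coreGood.mpr ⟨hw1, hw2, hc.1, hweq, hc.2⟩, rfl⟩
      · intro z hz
        rw [Finset.mem_filter] at hz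
        have e1 : z.1 = w.1 := congrArg Prod.fst hz.2
        have e2 : z.2.1 = w.2 := congrArg Prod.snd hz.2
        exact Prod.ext e1.symm (Prod.ext e2.symm rfl)
      · intro c hc
        rfl
    · intro z hz
      obtain ⟨hz1, hz2, hz3, hz4, hz5⟩ := mem_coreGood.mp hz
      refine mem_pairC.mpr ⟨hz1, hz2, ?_, hz4⟩
      intro h
      rw [h, sub_self, zero_mul] at hz5
      linarith
  have hstep2 : ∑ w ∈ pairC P, kfun A P w
      = ∑ t ∈ P.image Prod.snd, ∑ w ∈ Qrow P t, kfun A P w := by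
    rw [← Finset.sum_fiberwise_of_maps_to hmapsto (kfun A P)]
    apply Finset.sum_congr rfl
    intro t _
    apply Finset.sum_congr ?_ (fun _ _ => rfl)
    simp only [Qrow]
  have hQcard : ∀ t, (Qrow P t).card
      = (rowP P t).card * (rowP P t).card - (rowP P t).card := by
    intro t
    rw [Qrow_eq_offDiag, Finset.offDiag_card]
  have hpairsum : ∑ t ∈ P.image Prod.snd,
      ((rowP P t).card * (rowP P t).card - (rowP P t).card) = (pairC P).card := by
    rw [Finset.card_eq_sum_card_fiberwise hmapsto]
    apply Finset.sum_congr rfl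
    intro t _
    rw [← hQcard]
    rfl
  have hrb : ∑ t ∈ P.image Prod.snd, ∑ w ∈ Qrow P t, kfun A P w
      ≤ ∑ t ∈ P.image Prod.snd,
        (((rowP P t).card - 1) * (rowP P (t + 2 * A / dmin P t)).card
          + ((rowP P t).card - 1) * (rowP P (t - 2 * A / dmin P t)).card) :=
    Finset.sum_le_sum (fun t _ => rowbound hA hmin t)
  have hplus := halfsum P (fun t => t + 2 * A / dmin P t)
    (fun t t' ht ht' h => see_plus hA hmin ht ht' h)
  have hminus := halfsum P (fun t => t - 2 * A / dmin P t)
    (fun t t' ht ht' h => see_minus hA hmin ht ht' h)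
  have h2G : 2 * (coreGood A P).card ≤ 4 * (pairC P).card := by
    calc 2 * (coreGood A P).card
        = 2 * ∑ t ∈ P.image Prod.snd, ∑ w ∈ Qrow P t, kfun A P w := by
          rw [hstep1, hstep2]
      _ ≤ 2 * ∑ t ∈ P.image Prod.snd,
            (((rowP P t).card - 1) * (rowP P (t + 2 * A / dmin P t)).card
              + ((rowP P t).card - 1) * (rowP P (t - 2 * A / dmin P t)).card) :=
          Nat.mul_le_mul_left 2 hrb
      _ = ∑ t ∈ P.image Prod.snd,
            (2 * (((rowP P t).card - 1) * (rowP P (t + 2 * A / dmin P t)).card))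
          + ∑ t ∈ P.image Prod.snd,
            (2 * (((rowP P t).card - 1) * (rowP P (t - 2 * A / dmin P t)).card)) := by
          rw [Finset.mul_sum, ← Finset.sum_add_distrib]
          apply Finset.sum_congr rfl
          intro t _
          ring
      _ ≤ 2 * ∑ t ∈ P.image Prod.snd,
            ((rowP P t).card * (rowP P t).card - (rowP P t).card)
          + 2 * ∑ t ∈ P.image Prod.snd,
            ((rowP P t).card * (rowP P t).card - (rowP P t).card) :=
          Nat.add_le_add hplus hminus
      _ = 4 * (pairC P).card := by
          rw [hpairsum]
          ring
  omega

end WithMin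



noncomputable def det3 (p q r : Plane) : ℝ :=
  (q 0 - p 0) * (r 1 - p 1) - (q 1 - p 1) * (r 0 - p 0)

lemma triArea2_eq (a b c : Plane) : triArea2 a b c = |det3 a b c| / 2 := rfl

lemma det3_cycle (p q r : Plane) : det3 q r p = det3 p q r := by unfold det3; ring

lemma det3_swap (p q r : Plane) : det3 p r q = -det3 p q r := by unfold det3; ring

lemma det3_self (p r : Plane) : det3 p p r = 0 := by unfold det3; ring

lemma plane_ext {p q : Plane} (h0 : p 0 = q 0) (h1 : p 1 = q 1) : p = q := by
  ext i
  fin_cases i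
  · exact h0
  · exact h1

noncomputable def kappa (p q : Plane) : Pt :=
  if q 0 = p 0 then ((0:ℝ), (1:ℝ)) else ((1:ℝ), (q 1 - p 1) / (q 0 - p 0))

noncomputable def xco (u : Pt) (p : Plane) : ℝ := if u.1 = 0 then p 1 else p 0

noncomputable def yco (u : Pt) (p : Plane) : ℝ := if u.1 = 0 then -(p 0) else p 1 - u.2 * p 0

noncomputable def phi (u : Pt) (p : Plane) : Pt := (xco u p, yco u p)

lemma yco_kappa (p q : Plane) : yco (kappa p q) p = yco (kappa p q) q := by
  unfold kappa yco
  by_cases h : q 0 = p 0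
  · rw [if_pos h]
    norm_num [h]
  · rw [if_neg h]
    norm_num
    have hne : q 0 - p 0 ≠ 0 := sub_ne_zero.mpr h
    field_simp
    ring

lemma det3_eq_mul (u : Pt) (p q r : Plane) (h : yco u p = yco u q) :
    det3 p q r = (xco u q - xco u p) * (yco u r - yco u p) := by
  unfold det3 xco yco at *
  by_cases h0 : u.1 = 0
  · simp only [if_pos h0] at h ⊢
    have hq : q 0 = p 0 := by linarith
    linear_combination (r 1 - p 1) * hq
  · simp only [if_neg h0] at h ⊢
    linear_combination (r 0 - p 0) * h

lemma kappa_char (p q : Plane) : kappa p q = ((0:ℝ), (1:ℝ)) ∨ (kappa p q).1 = 1 := by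
  unfold kappa
  split_ifs
  · left; rfl
  · right; rfl

lemma kappa_eq_of {u : Pt} (hu : ∃ p' q' : Plane, p' ≠ q' ∧ u = kappa p' q')
    {p q : Plane} (hpq : p ≠ q) (h : yco u p = yco u q) : kappa p q = u := by
  obtain ⟨p', q', hne', rfl⟩ := hu
  rcases kappa_char p' q' with hc | hc
  · rw [hc] at h ⊢
    unfold yco at h
    norm_num at h
    unfold kappa
    rw [if_pos h.symm]
  · unfold yco at h
    rw [if_neg (by rw [hc]; norm_num), if_neg (by rw [hc]; norm_num)] at h
    have hq0 : q 0 ≠ p 0 := by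
      intro he
      apply hpq
      refine plane_ext he.symm ?_
      have h2 : p 1 - (kappa p' q').2 * p 0 = q 1 - (kappa p' q').2 * q 0 := h
      rw [he] at h2
      linarith
    unfold kappa
    rw [if_neg hq0]
    refine Prod.ext hc.symm ?_
    have hne : q 0 - p 0 ≠ 0 := sub_ne_zero.mpr hq0
    show (q 1 - p 1) / (q 0 - p 0) = (kappa p' q').2
    rw [div_eq_iff hne]
    linarith [h]

lemma phi_inj (u : Pt) : Function.Injective (phi u) := by
  intro p q h
  unfold phi xco yco at h
  rw [Prod.mk.injEq] at h
  obtain ⟨h1, h2⟩ := h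
  by_cases h0 : u.1 = 0
  · simp only [if_pos h0] at h1 h2
    exact plane_ext (by linarith) h1
  · simp only [if_neg h0] at h1 h2
    exact plane_ext h1 (by
      have e : u.2 * p 0 = u.2 * q 0 := by rw [h1]
      linarith)


noncomputable def Good (A : ℝ) (S : Finset Plane) : Finset (Plane × Plane × Plane) :=
  (S ×ˢ S ×ˢ S).filter fun z => det3 z.1 z.2.1 z.2.2 = 2 * A

lemma mem_Good {A : ℝ} {S : Finset Plane} {z : Plane × Plane × Plane} :
    z ∈ Good A S ↔ z.1 ∈ S ∧ z.2.1 ∈ S ∧ z.2.2 ∈ S ∧ det3 z.1 z.2.1 z.2.2 = 2 * A := by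
  simp [Good, Finset.mem_filter, Finset.mem_product, and_assoc]

lemma class_card_good (A : ℝ) (hApos : 0 < A) (S : Finset Plane) {u : Pt}
    (hu : ∃ p' q' : Plane, p' ≠ q' ∧ u = kappa p' q') :
    ((Good A S).filter fun z => kappa z.1 z.2.1 = u).card
      = (coreGood A (S.image (phi u))).card := by
  refine Finset.card_bij (fun z _ => (phi u z.1, phi u z.2.1, phi u z.2.2)) ?_ ?_ ?_
  · intro z hz
    rw [Finset.mem_filter] at hz
    obtain ⟨hzg, hzk⟩ := hz
    obtain ⟨h1, h2, h3, hdet⟩ := mem_Good.mp hzg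
    have hy : yco u z.1 = yco u z.2.1 := by
      have := yco_kappa z.1 z.2.1
      rwa [hzk] at this
    refine mem_coreGood.mpr ⟨Finset.mem_image_of_mem _ h1, Finset.mem_image_of_mem _ h2,
      Finset.mem_image_of_mem _ h3, hy, ?_⟩
    show (xco u z.2.1 - xco u z.1) * (yco u z.2.2 - yco u z.1) = 2 * A
    rw [← det3_eq_mul u _ _ _ hy]
    exact hdet
  · intro z1 h1 z2 h2 heq
    have e1 : phi u z1.1 = phi u z2.1 := congrArg (fun t => t.1) heq
    have e2 : phi u z1.2.1 = phi u z2.2.1 := congrArg (fun t => t.2.1) heq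
    have e3 : phi u z1.2.2 = phi u z2.2.2 := congrArg (fun t => t.2.2) heq
    exact Prod.ext (phi_inj u e1) (Prod.ext (phi_inj u e2) (phi_inj u e3))
  · intro y hy
    obtain ⟨hy1, hy2, hy3, hyy, hyprod⟩ := mem_coreGood.mp hy
    obtain ⟨p, hp, hφp⟩ := Finset.mem_image.mp hy1
    obtain ⟨q, hq, hφq⟩ := Finset.mem_image.mp hy2
    obtain ⟨r, hr, hφr⟩ := Finset.mem_image.mp hy3
    have hyco : yco u p = yco u q := by
      have e1 : (phi u p).2 = (phi u q).2 := by rw [hφp, hφq]; exact hyy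
      exact e1
    have hpq : p ≠ q := by
      intro h
      rw [← hφp, ← hφq, ← h] at hyprod
      rw [sub_self, zero_mul] at hyprod
      linarith
    have hdet : det3 p q r = 2 * A := by
      rw [det3_eq_mul u p q r hyco]
      have : (xco u q - xco u p) * (yco u r - yco u p)
          = (y.2.1.1 - y.1.1) * (y.2.2.2 - y.1.2) := by
        rw [← hφp, ← hφq, ← hφr]
        rfl
      rw [this]
      exact hyprod
    refine ⟨(p, q, r), Finset.mem_filter.mpr ⟨mem_Good.mpr ⟨hp, hq, hr, hdet⟩,
      kappa_eq_of hu hpq hyco⟩, ?_⟩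
    show ((phi u p, phi u q, phi u r) : Pt × Pt × Pt) = y
    rw [hφp, hφq, hφr]

lemma class_card_pair (S : Finset Plane) {u : Pt}
    (hu : ∃ p' q' : Plane, p' ≠ q' ∧ u = kappa p' q') :
    ((S.offDiag).filter fun w => kappa w.1 w.2 = u).card
      = (pairC (S.image (phi u))).card := by
  refine Finset.card_bij (fun w _ => (phi u w.1, phi u w.2)) ?_ ?_ ?_
  · intro w hw
    rw [Finset.mem_filter] at hw
    obtain ⟨hwo, hwk⟩ := hw
    obtain ⟨h1, h2, hne⟩ := Finset.mem_offDiag.mp hwo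
    have hy : yco u w.1 = yco u w.2 := by
      have := yco_kappa w.1 w.2
      rwa [hwk] at this
    exact mem_pairC.mpr ⟨Finset.mem_image_of_mem _ h1, Finset.mem_image_of_mem _ h2,
      fun h => hne (phi_inj u h), hy⟩
  · intro w1 h1 w2 h2 heq
    have e1 : phi u w1.1 = phi u w2.1 := congrArg (fun t => t.1) heq
    have e2 : phi u w1.2 = phi u w2.2 := congrArg (fun t => t.2) heq
    exact Prod.ext (phi_inj u e1) (phi_inj u e2)
  · intro y hy
    obtain ⟨hy1, hy2, hyne, hyy⟩ := mem_pairC.mp hy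
    obtain ⟨p, hp, hφp⟩ := Finset.mem_image.mp hy1
    obtain ⟨q, hq, hφq⟩ := Finset.mem_image.mp hy2
    have hyco : yco u p = yco u q := by
      have e1 : (phi u p).2 = (phi u q).2 := by rw [hφp, hφq]; exact hyy
      exact e1
    have hpq : p ≠ q := by
      intro h
      apply hyne
      rw [← hφp, ← hφq, h]
    refine ⟨(p, q), Finset.mem_filter.mpr ⟨Finset.mem_offDiag.mpr ⟨hp, hq, hpq⟩,
      kappa_eq_of hu hpq hyco⟩, ?_⟩
    show ((phi u p, phi u q) : Pt × Pt) = y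
    rw [hφp, hφq]

lemma hmin_image (A : ℝ) (S : Finset Plane)
    (hlb : ∀ p ∈ S, ∀ q ∈ S, ∀ r ∈ S, det3 p q r ≠ 0 → 2 * A ≤ |det3 p q r|) (u : Pt) :
    ∀ a ∈ S.image (phi u), ∀ b ∈ S.image (phi u), ∀ c ∈ S.image (phi u),
      a.2 = b.2 → a ≠ b → c.2 ≠ a.2 → 2 * A ≤ |b.1 - a.1| * |c.2 - a.2| := by
  intro a ha b hb c hc hab hne hca
  obtain ⟨p, hp, hφp⟩ := Finset.mem_image.mp ha
  obtain ⟨q, hq, hφq⟩ := Finset.mem_image.mp hb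
  obtain ⟨r, hr, hφr⟩ := Finset.mem_image.mp hc
  have hyco : yco u p = yco u q := by
    have e1 : (phi u p).2 = (phi u q).2 := by rw [hφp, hφq]; exact hab
    exact e1
  have hdet : det3 p q r = (b.1 - a.1) * (c.2 - a.2) := by
    rw [det3_eq_mul u p q r hyco, ← hφp, ← hφq, ← hφr]
    rfl
  have hbne : b.1 ≠ a.1 := fun h => hne (Prod.ext h.symm hab)
  have hdne : det3 p q r ≠ 0 := by
    rw [hdet]
    exact mul_ne_zero (sub_ne_zero.mpr hbne) (sub_ne_zero.mpr hca)
  have := hlb p hp q hq r hr hdne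
  rw [hdet, abs_mul] at this
  exact this

lemma triple_distinct {a b c : Plane} (h : ({a, b, c} : Finset Plane).card = 3) :
    a ≠ b ∧ a ≠ c ∧ b ≠ c := by
  have hpair : ∀ x y : Plane, ({x, y} : Finset Plane).card ≤ 2 := by
    intro x y
    calc ({x, y} : Finset Plane).card ≤ ({y} : Finset Plane).card + 1 :=
        Finset.card_insert_le _ _
      _ = 2 := by simp
  refine ⟨?_, ?_, ?_⟩ <;> intro he
  · have hsub : ({a, b, c} : Finset Plane) ⊆ {a, c} := by
      intro x hx
      simp only [Finset.mem_insert, Finset.mem_singleton] at hx ⊢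
      rcases hx with h1 | h1 | h1
      · exact Or.inl h1
      · exact Or.inl (by rw [h1, he])
      · exact Or.inr h1
    have := (Finset.card_le_card hsub).trans (hpair a c)
    omega
  · have hsub : ({a, b, c} : Finset Plane) ⊆ {a, b} := by
      intro x hx
      simp only [Finset.mem_insert, Finset.mem_singleton] at hx ⊢
      rcases hx with h1 | h1 | h1
      · exact Or.inl h1
      · exact Or.inr h1
      · exact Or.inl (by rw [h1, he])
    have := (Finset.card_le_card hsub).trans (hpair a b)
    omega
  · have hsub : ({a, b, c} : Finset Plane) ⊆ {a, b} := by
      intro x hx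
      simp only [Finset.mem_insert, Finset.mem_singleton] at hx ⊢
      rcases hx with h1 | h1 | h1
      · exact Or.inl h1
      · exact Or.inr h1
      · exact Or.inr (by rw [h1, ← he])
    have := (Finset.card_le_card hsub).trans (hpair a b)
    omega

end MinArea2Aux

open MinArea2Aux in
/-- `n` points in the plane span at most `(2/3)·(n² − n)` triangles of minimum
(nonzero) area. -/
theorem min_area_triangles_plane_two_thirds (n : ℕ) (S : Finset Plane)
    (hS : S.card = n) (A : ℝ) (hApos : 0 < A) (hA : IsLeast (posAreaSet2 S) A) :
    (areaTripleCount2 S A : ℝ) ≤ (2 / 3) * ((n : ℝ) ^ 2 - n) := by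
  classical
  have hlb : ∀ p ∈ S, ∀ q ∈ S, ∀ r ∈ S, det3 p q r ≠ 0 → 2 * A ≤ |det3 p q r| := by
    intro p hp q hq r hr hne
    have habs : 0 < |det3 p q r| := abs_pos.mpr hne
    have hpos : 0 < triArea2 p q r := by
      rw [triArea2_eq]
      linarith
    have hle : A ≤ triArea2 p q r := hA.2 ⟨p, hp, q, hq, r, hr, hpos, rfl⟩
    rw [triArea2_eq] at hle
    linarith
  set F := S.powerset.filter (fun T => T.card = 3 ∧
    ∃ a b c : Plane, T = {a, b, c} ∧ triArea2 a b c = A) with hF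
  have hcount : areaTripleCount2 S A = F.card := by
    have hset : {T : Finset Plane | T ⊆ S ∧ T.card = 3 ∧
        ∃ a b c : Plane, T = {a, b, c} ∧ triArea2 a b c = A} = ↑F := by
      ext T
      simp only [Set.mem_setOf_eq, hF, Finset.coe_filter, Finset.mem_powerset]
    rw [areaTripleCount2, hset, Set.ncard_coe_finset]
  have h3 : 3 * F.card ≤ (Good A S).card := by
    have hper : ∀ T ∈ F, 3 ≤ ((Good A S).filter
        fun z => ({z.1, z.2.1, z.2.2} : Finset Plane) = T).card := by
      intro T hT
      rw [hF, Finset.mem_filter, Finset.mem_powerset] at hT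
      obtain ⟨hTS, hT3, a, b, c, hTabc, harea⟩ := hT
      have key : ∀ p q r : Plane, p ∈ S → q ∈ S → r ∈ S → p ≠ q → p ≠ r → q ≠ r →
          det3 p q r = 2 * A → ({p, q, r} : Finset Plane) = T →
          3 ≤ ((Good A S).filter
            fun z => ({z.1, z.2.1, z.2.2} : Finset Plane) = T).card := by
        intro p q r hp hq hr hpq hpr hqr hdet hTeq
        have hz1 : ((p, q, r) : Plane × Plane × Plane) ∈ (Good A S).filter
            (fun z => ({z.1, z.2.1, z.2.2} : Finset Plane) = T) :=
          Finset.mem_filter.mpr ⟨mem_Good.mpr ⟨hp, hq, hr, hdet⟩, hTeq⟩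
        have hT2 : ({q, r, p} : Finset Plane) = T := by
          rw [← hTeq]
          ext x
          simp only [Finset.mem_insert, Finset.mem_singleton]
          tauto
        have hT3' : ({r, p, q} : Finset Plane) = T := by
          rw [← hTeq]
          ext x
          simp only [Finset.mem_insert, Finset.mem_singleton]
          tauto
        have hz2 : ((q, r, p) : Plane × Plane × Plane) ∈ (Good A S).filter
            (fun z => ({z.1, z.2.1, z.2.2} : Finset Plane) = T) :=
          Finset.mem_filter.mpr ⟨mem_Good.mpr ⟨hq, hr, hp, by
            show det3 q r p = 2 * A
            rw [det3_cycle]; exact hdet⟩, hT2⟩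
        have hz3 : ((r, p, q) : Plane × Plane × Plane) ∈ (Good A S).filter
            (fun z => ({z.1, z.2.1, z.2.2} : Finset Plane) = T) :=
          Finset.mem_filter.mpr ⟨mem_Good.mpr ⟨hr, hp, hq, by
            show det3 r p q = 2 * A
            rw [det3_cycle, det3_cycle]; exact hdet⟩, hT3'⟩
        have hsub : ({((p, q, r) : Plane × Plane × Plane), (q, r, p), (r, p, q)} :
            Finset (Plane × Plane × Plane)) ⊆ (Good A S).filter
            (fun z => ({z.1, z.2.1, z.2.2} : Finset Plane) = T) := by
          intro z hz
          simp only [Finset.mem_insert, Finset.mem_singleton] at hz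
          rcases hz with h | h | h <;> subst h
          · exact hz1
          · exact hz2
          · exact hz3
        have hcard : ({((p, q, r) : Plane × Plane × Plane), (q, r, p), (r, p, q)} :
            Finset (Plane × Plane × Plane)).card = 3 := by
          refine Finset.card_eq_three.mpr ⟨(p, q, r), (q, r, p), (r, p, q), ?_, ?_, ?_, rfl⟩
          · exact fun h => hpq (congrArg Prod.fst h)
          · exact fun h => hpr (congrArg Prod.fst h)
          · exact fun h => hqr (congrArg Prod.fst h)
        calc 3 = ({((p, q, r) : Plane × Plane × Plane), (q, r, p), (r, p, q)} :
            Finset (Plane × Plane × Plane)).card := hcard.symm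
          _ ≤ _ := Finset.card_le_card hsub
      obtain ⟨hab, hac, hbc⟩ := triple_distinct (hTabc ▸ hT3)
      have ha : a ∈ S := hTS (by rw [hTabc]; simp)
      have hb : b ∈ S := hTS (by rw [hTabc]; simp)
      have hc : c ∈ S := hTS (by rw [hTabc]; simp)
      rw [triArea2_eq] at harea
      have habs : |det3 a b c| = 2 * A := by linarith
      rcases (abs_eq (by linarith : (0:ℝ) ≤ 2 * A)).mp habs with hdet | hdet
      · exact key a b c ha hb hc hab hac hbc hdet hTabc.symm
      · have hdet' : det3 a c b = 2 * A := by
          rw [det3_swap]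
          linarith
        have hTacb : ({a, c, b} : Finset Plane) = T := by
          rw [hTabc]
          ext x
          simp only [Finset.mem_insert, Finset.mem_singleton]
          tauto
        exact key a c b ha hc hb hac hab (fun h => hbc h.symm) hdet' hTacb
    have hdisj : (F : Set (Finset Plane)).PairwiseDisjoint
        (fun T => (Good A S).filter fun z => ({z.1, z.2.1, z.2.2} : Finset Plane) = T) := by
      intro T1 h1 T2 h2 hne
      refine Finset.disjoint_left.mpr ?_
      intro z hz1 hz2
      rw [Finset.mem_filter] at hz1 hz2
      exact hne (hz1.2.symm.trans hz2.2)
    calc 3 * F.card = ∑ _T ∈ F, 3 := by rw [Finset.sum_const, smul_eq_mul]; ring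
      _ ≤ ∑ T ∈ F, ((Good A S).filter
            fun z => ({z.1, z.2.1, z.2.2} : Finset Plane) = T).card :=
          Finset.sum_le_sum hper
      _ = (F.biUnion fun T => (Good A S).filter
            fun z => ({z.1, z.2.1, z.2.2} : Finset Plane) = T).card :=
          (Finset.card_biUnion hdisj).symm
      _ ≤ (Good A S).card :=
          Finset.card_le_card (Finset.biUnion_subset.mpr fun T _ => Finset.filter_subset _ _)
  have h4 : (Good A S).card ≤ 2 * S.offDiag.card := by
    set Keys := S.offDiag.image (fun w => kappa w.1 w.2) with hK
    have hmapsG : ∀ z ∈ Good A S, kappa z.1 z.2.1 ∈ Keys := by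
      intro z hz
      obtain ⟨h1, h2, _, hdet⟩ := mem_Good.mp hz
      have hne : z.1 ≠ z.2.1 := by
        intro h
        rw [← h, det3_self] at hdet
        linarith
      exact Finset.mem_image.mpr ⟨(z.1, z.2.1), Finset.mem_offDiag.mpr ⟨h1, h2, hne⟩, rfl⟩
    have hmapsP : ∀ w ∈ S.offDiag, kappa w.1 w.2 ∈ Keys :=
      fun w hw => Finset.mem_image_of_mem _ hw
    rw [Finset.card_eq_sum_card_fiberwise hmapsG, Finset.card_eq_sum_card_fiberwise hmapsP,
      Finset.mul_sum]
    apply Finset.sum_le_sum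
    intro u hu
    obtain ⟨w0, hw0, hue⟩ := Finset.mem_image.mp hu
    have hu' : ∃ p' q' : Plane, p' ≠ q' ∧ u = kappa p' q' :=
      ⟨w0.1, w0.2, (Finset.mem_offDiag.mp hw0).2.2, hue.symm⟩
    rw [class_card_good A hApos S hu', class_card_pair S hu']
    exact core hApos (hmin_image A S hlb u)
  have h5 : S.offDiag.card = n * n - n := by rw [Finset.offDiag_card, hS]
  have h6 : 3 * areaTripleCount2 S A ≤ 2 * (n * n - n) := by
    rw [hcount]
    calc 3 * F.card ≤ (Good A S).card := h3
      _ ≤ 2 * S.offDiag.card := h4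
      _ = 2 * (n * n - n) := by rw [h5]
  have hnn : n ≤ n * n := by
    rcases Nat.eq_zero_or_pos n with h | h
    · simp [h]
    · exact Nat.le_mul_of_pos_left n h
  have h7 : ((3 * areaTripleCount2 S A : ℕ) : ℝ) ≤ ((2 * (n * n - n) : ℕ) : ℝ) :=
    Nat.cast_le.mpr h6
  push_cast [Nat.cast_sub hnn] at h7
  have hsq : ((n : ℝ)) ^ 2 = (n : ℝ) * n := sq (n : ℝ) ▸ by ring
  linarith
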